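/- Suppose the sequences (fᵏ, uᵏ) generated by the alternating algorithm are bounded, the orthogonality constraints W₁ᵏ ∈ 𝒟₁ and W₂ᵏ ∈ 𝒟₂ hold for all k, and the objective values Fᵏ are bounded by F⁰. Then the coefficient sequences v₁ᵏ and v₂ᵏ satisfy ‖vᵢᵏ‖ ≤ ‖Wᵢᵏ xᵢᵏ‖ + √(2F⁰/μᵢ), and hence the full sequence Xᵏ = (fᵏ, uᵏ, W₁ᵏ, W₂ᵏ, v₁ᵏ, v₂ᵏ) is bounded and admits a convergent subsequence. -/

import Mathlib

open Matrix Filter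

instance matFCT {p m : ℕ} : FirstCountableTopology (Matrix (Fin p) (Fin m) ℝ) :=
  inferInstanceAs (FirstCountableTopology (Fin p → Fin m → ℝ))

/-- Euclidean-norm triangle inequality in coordinates. -/
lemma sqrt_sum_sq_tri {N : ℕ} (a v : Fin N → ℝ) :
    Real.sqrt (∑ j, v j ^ 2) ≤
      Real.sqrt (∑ j, a j ^ 2) + Real.sqrt (∑ j, (a j - v j) ^ 2) := by
  set A : EuclideanSpace ℝ (Fin N) := (WithLp.equiv 2 (Fin N → ℝ)).symm a
  set V : EuclideanSpace ℝ (Fin N) := (WithLp.equiv 2 (Fin N → ℝ)).symm v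
  have h : ‖V‖ ≤ ‖A‖ + ‖A - V‖ := by
    have h2 := norm_sub_le A (A - V)
    simpa [sub_sub_cancel] using h2
  have hA : ‖A‖ = Real.sqrt (∑ j, a j ^ 2) := by
    rw [EuclideanSpace.norm_eq]; simp [A, Real.norm_eq_abs, sq_abs]
  have hV : ‖V‖ = Real.sqrt (∑ j, v j ^ 2) := by
    rw [EuclideanSpace.norm_eq]; simp [V, Real.norm_eq_abs, sq_abs]
  have hAV : ‖A - V‖ = Real.sqrt (∑ j, (a j - v j) ^ 2) := by
    rw [EuclideanSpace.norm_eq]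
    simp [A, V, Real.norm_eq_abs, sq_abs, PiLp.toLp_apply]
  rwa [hA, hV, hAV] at h

/-- Norm preservation under orthonormal columns. -/
lemma sum_sq_mulVec {p m : ℕ} (W : Matrix (Fin p) (Fin m) ℝ) (f : Fin m → ℝ)
    (h : Wᵀ * W = 1) : ∑ j, (W.mulVec f j) ^ 2 = ∑ i, f i ^ 2 := by
  have h1 : (W.mulVec f) ⬝ᵥ (W.mulVec f) = f ⬝ᵥ f := by
    rw [dotProduct_mulVec, ← mulVec_transpose, mulVec_mulVec, h, one_mulVec]
  simpa [dotProduct, sq] using h1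

/-- Entries of a matrix with orthonormal columns are bounded by 1. -/
lemma entry_bound {p m : ℕ} (W : Matrix (Fin p) (Fin m) ℝ)
    (h : Wᵀ * W = 1) (i : Fin p) (j : Fin m) : W i j ∈ Set.Icc (-1 : ℝ) 1 := by
  have hd : ∑ i, W i j ^ 2 = 1 := by
    have := congrFun (congrFun h j) j
    simpa [Matrix.mul_apply, Matrix.one_apply, sq] using this
  have hsq : W i j ^ 2 ≤ 1 := by
    rw [← hd]
    exact Finset.single_le_sum (fun i _ => sq_nonneg (W i j)) (Finset.mem_univ i)
  constructor <;> nlinarith [hsq, sq_nonneg (W i j + 1), sq_nonneg (W i j - 1)]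

/-- Under boundedness of `(fᵏ, uᵏ)`, orthogonality of `W₁ᵏ, W₂ᵏ`, and the
objective bounds, the coefficient sequences satisfy
`‖vᵢᵏ‖ ≤ ‖Wᵢᵏ xᵢᵏ‖ + √(2F⁰/μᵢ)`; hence the full sequence is bounded and has a
convergent subsequence. -/
theorem stmt_8 {m n p q : ℕ}
    (f : ℕ → Fin m → ℝ) (u : ℕ → Fin n → ℝ)
    (W1 : ℕ → Matrix (Fin p) (Fin m) ℝ) (W2 : ℕ → Matrix (Fin q) (Fin n) ℝ)
    (v1 : ℕ → Fin p → ℝ) (v2 : ℕ → Fin q → ℝ)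
    (Fk : ℕ → ℝ) (μ1 μ2 : ℝ) (hμ1 : 0 < μ1) (hμ2 : 0 < μ2)
    (hbound : ∃ C : ℝ, ∀ k, (∀ i, |f k i| ≤ C) ∧ (∀ i, |u k i| ≤ C))
    (hW1 : ∀ k, (W1 k)ᵀ * W1 k = 1) (hW2 : ∀ k, (W2 k)ᵀ * W2 k = 1)
    (hFpos : ∀ k, 0 ≤ Fk k) (hF0 : ∀ k, Fk k ≤ Fk 0)
    (hterm1 : ∀ k, μ1 / 2 * ∑ j, ((W1 k).mulVec (f k) j - v1 k j) ^ 2 ≤ Fk k)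
    (hterm2 : ∀ k, μ2 / 2 * ∑ j, ((W2 k).mulVec (u k) j - v2 k j) ^ 2 ≤ Fk k) :
    (∀ k,
      Real.sqrt (∑ j, (v1 k j) ^ 2) ≤
          Real.sqrt (∑ j, ((W1 k).mulVec (f k) j) ^ 2) + Real.sqrt (2 * Fk 0 / μ1) ∧
      Real.sqrt (∑ j, (v2 k j) ^ 2) ≤
          Real.sqrt (∑ j, ((W2 k).mulVec (u k) j) ^ 2) + Real.sqrt (2 * Fk 0 / μ2)) ∧
    (∃ φ : ℕ → ℕ, StrictMono φ ∧
      ∃ Xstar : (Fin m → ℝ) × (Fin n → ℝ) × Matrix (Fin p) (Fin m) ℝ ×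
          Matrix (Fin q) (Fin n) ℝ × (Fin p → ℝ) × (Fin q → ℝ),
        Tendsto (fun k => (f (φ k), u (φ k), W1 (φ k), W2 (φ k), v1 (φ k), v2 (φ k)))
          atTop (nhds Xstar)) := by
  obtain ⟨C, hC⟩ := hbound
  set C' : ℝ := max C 0 with hC'
  have hC'0 : (0 : ℝ) ≤ C' := le_max_right _ _
  -- part 1
  have part1 : ∀ k,
      Real.sqrt (∑ j, (v1 k j) ^ 2) ≤
          Real.sqrt (∑ j, ((W1 k).mulVec (f k) j) ^ 2) + Real.sqrt (2 * Fk 0 / μ1) ∧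
      Real.sqrt (∑ j, (v2 k j) ^ 2) ≤
          Real.sqrt (∑ j, ((W2 k).mulVec (u k) j) ^ 2) + Real.sqrt (2 * Fk 0 / μ2) := by
    intro k
    constructor
    · refine (sqrt_sum_sq_tri ((W1 k).mulVec (f k)) (v1 k)).trans ?_
      gcongr
      rw [le_div_iff₀ hμ1]
      nlinarith [hterm1 k, hF0 k]
    · refine (sqrt_sum_sq_tri ((W2 k).mulVec (u k)) (v2 k)).trans ?_
      gcongr
      rw [le_div_iff₀ hμ2]
      nlinarith [hterm2 k, hF0 k]
  refine ⟨part1, ?_⟩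
  -- bounds on the sums of squares of f and u
  have hfs : ∀ k, ∑ i, f k i ^ 2 ≤ m * C' ^ 2 := by
    intro k
    calc ∑ i, f k i ^ 2 ≤ ∑ _i : Fin m, C' ^ 2 := by
          refine Finset.sum_le_sum fun i _ => ?_
          have := (hC k).1 i
          nlinarith [abs_nonneg (f k i), sq_abs (f k i), le_max_left C (0:ℝ)]
      _ = m * C' ^ 2 := by simp [mul_comm]
  have hus : ∀ k, ∑ i, u k i ^ 2 ≤ n * C' ^ 2 := by
    intro k
    calc ∑ i, u k i ^ 2 ≤ ∑ _i : Fin n, C' ^ 2 := by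
          refine Finset.sum_le_sum fun i _ => ?_
          have := (hC k).2 i
          nlinarith [abs_nonneg (u k i), sq_abs (u k i), le_max_left C (0:ℝ)]
      _ = n * C' ^ 2 := by simp [mul_comm]
  -- bounds on v entries
  set R1 : ℝ := Real.sqrt (m * C' ^ 2) + Real.sqrt (2 * Fk 0 / μ1) with hR1
  set R2 : ℝ := Real.sqrt (n * C' ^ 2) + Real.sqrt (2 * Fk 0 / μ2) with hR2
  have hR1nn : 0 ≤ R1 := add_nonneg (Real.sqrt_nonneg _) (Real.sqrt_nonneg _)
  have hR2nn : 0 ≤ R2 := add_nonneg (Real.sqrt_nonneg _) (Real.sqrt_nonneg _)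
  have hv1 : ∀ k j, |v1 k j| ≤ R1 := by
    intro k j
    have h1 : |v1 k j| ≤ Real.sqrt (∑ j, (v1 k j) ^ 2) := by
      rw [← Real.sqrt_sq_eq_abs]
      exact Real.sqrt_le_sqrt
        (Finset.single_le_sum (fun i _ => sq_nonneg (v1 k i)) (Finset.mem_univ j))
    refine h1.trans ((part1 k).1.trans ?_)
    rw [sum_sq_mulVec _ _ (hW1 k)]
    exact add_le_add_left (Real.sqrt_le_sqrt (hfs k)) _
  have hv2 : ∀ k j, |v2 k j| ≤ R2 := by
    intro k j
    have h1 : |v2 k j| ≤ Real.sqrt (∑ j, (v2 k j) ^ 2) := by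
      rw [← Real.sqrt_sq_eq_abs]
      exact Real.sqrt_le_sqrt
        (Finset.single_le_sum (fun i _ => sq_nonneg (v2 k i)) (Finset.mem_univ j))
    refine h1.trans ((part1 k).2.trans ?_)
    rw [sum_sq_mulVec _ _ (hW2 k)]
    exact add_le_add_left (Real.sqrt_le_sqrt (hus k)) _
  -- the compact set
  set KW1 : Set (Matrix (Fin p) (Fin m) ℝ) :=
    Set.univ.pi fun _ => Set.univ.pi fun _ => Set.Icc (-1 : ℝ) 1 with hKW1
  set KW2 : Set (Matrix (Fin q) (Fin n) ℝ) :=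
    Set.univ.pi fun _ => Set.univ.pi fun _ => Set.Icc (-1 : ℝ) 1 with hKW2
  have hKW1c : IsCompact KW1 :=
    isCompact_univ_pi fun _ => isCompact_univ_pi fun _ => isCompact_Icc
  have hKW2c : IsCompact KW2 :=
    isCompact_univ_pi fun _ => isCompact_univ_pi fun _ => isCompact_Icc
  set K : Set ((Fin m → ℝ) × (Fin n → ℝ) × Matrix (Fin p) (Fin m) ℝ ×
      Matrix (Fin q) (Fin n) ℝ × (Fin p → ℝ) × (Fin q → ℝ)) :=
    (Metric.closedBall 0 C') ×ˢ (Metric.closedBall 0 C') ×ˢ KW1 ×ˢ KW2 ×ˢ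
      (Metric.closedBall 0 R1) ×ˢ (Metric.closedBall 0 R2) with hK
  have hKc : IsCompact K :=
    (isCompact_closedBall _ _).prod ((isCompact_closedBall _ _).prod
      (hKW1c.prod (hKW2c.prod
        ((isCompact_closedBall _ _).prod (isCompact_closedBall _ _)))))
  have hmem : ∀ k, (f k, u k, W1 k, W2 k, v1 k, v2 k) ∈ K := by
    intro k
    refine ⟨?_, ?_, ?_, ?_, ?_, ?_⟩
    · rw [Metric.mem_closedBall, dist_zero_right]
      refine pi_norm_le_iff_of_nonneg hC'0 |>.2 fun i => ?_
      rw [Real.norm_eq_abs, hC']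
      exact ((hC k).1 i).trans (le_max_left _ _)
    · rw [Metric.mem_closedBall, dist_zero_right]
      refine pi_norm_le_iff_of_nonneg hC'0 |>.2 fun i => ?_
      rw [Real.norm_eq_abs, hC']
      exact ((hC k).2 i).trans (le_max_left _ _)
    · exact fun i _ => fun j _ => entry_bound _ (hW1 k) i j
    · exact fun i _ => fun j _ => entry_bound _ (hW2 k) i j
    · rw [Metric.mem_closedBall, dist_zero_right]
      exact pi_norm_le_iff_of_nonneg hR1nn |>.2 fun j => by
        simpa [Real.norm_eq_abs] using hv1 k j
    · rw [Metric.mem_closedBall, dist_zero_right]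
      exact pi_norm_le_iff_of_nonneg hR2nn |>.2 fun j => by
        simpa [Real.norm_eq_abs] using hv2 k j
  obtain ⟨a, _, φ, hφ, hconv⟩ := hKc.tendsto_subseq hmem
  exact ⟨φ, hφ, a, hconv⟩
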